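/- Let f_1,...,f_m ∈ ℝ^n with a_0 = min over unit x,y of Σ_j |⟨x,f_j⟩|²|⟨y,f_j⟩|² and Λ⁴ = max over unit x of Σ_j |⟨x,f_j⟩|⁴. For x,y ∈ ℝ^n let d_1(x,y) = ‖xxᵀ - yyᵀ‖_1 (nuclear norm). Then for all x, y: √a_0 · d_1(x,y) ≤ (Σ_{j=1}^m (|⟨f_j,x⟩|² - |⟨f_j,y⟩|²)²)^{1/2} ≤ Λ² · d_1(x,y). -/

import Mathlib

open scoped BigOperators Matrix
open Matrix Submodule Module

lemma trace_eig {k : ℕ} (A : Matrix (Fin k) (Fin k) ℝ) (hA : A.IsHermitian) :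
    A.trace = ∑ i, hA.eigenvalues i := by
  conv_lhs => rw [hA.spectral_theorem, Unitary.conjStarAlgAut_apply]
  rw [Matrix.trace_mul_comm, ← mul_assoc]
  simp [Matrix.trace_diagonal]

lemma trace_sq_eig {k : ℕ} (A : Matrix (Fin k) (Fin k) ℝ) (hA : A.IsHermitian) :
    (A * A).trace = ∑ i, hA.eigenvalues i ^ 2 := by
  set U : Matrix (Fin k) (Fin k) ℝ := (hA.eigenvectorUnitary : Matrix (Fin k) (Fin k) ℝ)
  have hU : star U * U = 1 := (Matrix.mem_unitaryGroup_iff').mp hA.eigenvectorUnitary.2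
  set D : Matrix (Fin k) (Fin k) ℝ := diagonal (RCLike.ofReal ∘ hA.eigenvalues)
  conv_lhs => rw [hA.spectral_theorem, Unitary.conjStarAlgAut_apply]
  have h2 : (U * D * star U) * (U * D * star U) = U * (D * D) * star U := by
    rw [mul_assoc (U * D), mul_assoc U D (star U), ← mul_assoc (star U) U, hU, one_mul, ← mul_assoc U D, ← mul_assoc, mul_assoc U D D]
  rw [h2, Matrix.trace_mul_comm, ← mul_assoc, hU, one_mul, diagonal_mul_diagonal,
    Matrix.trace_diagonal]
  simp [sq]

lemma rank_le_two {k : ℕ} (x y : Fin k → ℝ) :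
    (Matrix.vecMulVec x x - Matrix.vecMulVec y y).rank ≤ 2 := by
  have hsub : LinearMap.range (Matrix.vecMulVec x x - Matrix.vecMulVec y y).mulVecLin
      ≤ Submodule.span ℝ {x, y} := by
    rintro w ⟨v, rfl⟩
    have : (Matrix.vecMulVec x x - Matrix.vecMulVec y y).mulVecLin v
        = (x ⬝ᵥ v) • x - (y ⬝ᵥ v) • y := by
      ext i
      simp [Matrix.mulVecLin, Matrix.mulVec, Matrix.vecMulVec_apply, dotProduct,
        Finset.mul_sum, Finset.sum_mul]
      congr 1 <;> exact Finset.sum_congr rfl fun j _ => by ring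
    rw [this]
    exact sub_mem (Submodule.smul_mem _ _ (Submodule.subset_span (by simp)))
      (Submodule.smul_mem _ _ (Submodule.subset_span (by simp)))
  calc (Matrix.vecMulVec x x - Matrix.vecMulVec y y).rank
      ≤ Module.finrank ℝ (Submodule.span ℝ ({x, y} : Set (Fin k → ℝ))) :=
        Submodule.finrank_mono hsub
    _ ≤ _ := by
        refine (finrank_span_le_card _).trans ?_
        have : ({x, y} : Set (Fin k → ℝ)).toFinset ⊆ {x, y} := by
          intro a ha; simp at ha; rcases ha with h|h <;> simp [h]
        calc ({x, y} : Set (Fin k → ℝ)).toFinset.card ≤ ({x, y} : Finset (Fin k → ℝ)).card :=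
              Finset.card_le_card this
          _ ≤ 2 := Finset.card_insert_le _ _ |>.trans (by simp)

lemma trace_vmv {k : ℕ} (a b : Fin k → ℝ) :
    (Matrix.vecMulVec a b).trace = a ⬝ᵥ b := by
  simp [Matrix.trace, Matrix.diag, Matrix.vecMulVec_apply, dotProduct]

lemma trace_vmv_mul {k : ℕ} (a b c d : Fin k → ℝ) :
    (Matrix.vecMulVec a b * Matrix.vecMulVec c d).trace = (b ⬝ᵥ c) * (d ⬝ᵥ a) := by
  simp only [Matrix.trace, Matrix.diag, Matrix.mul_apply, Matrix.vecMulVec_apply,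
    dotProduct, Finset.sum_mul_sum]
  rw [Finset.sum_comm]
  exact Finset.sum_congr rfl fun i _ => Finset.sum_congr rfl fun j _ => by ring

lemma eig_identity {k : ℕ} (e : Fin k → ℝ)
    (hcard : (Finset.univ.filter (fun i => e i ≠ 0)).card ≤ 2)
    (hprod : (∑ i, e i) ^ 2 ≤ ∑ i, e i ^ 2) :
    (∑ i, |e i|) ^ 2 = 2 * (∑ i, e i ^ 2) - (∑ i, e i) ^ 2 := by
  classical
  set S := Finset.univ.filter (fun i => e i ≠ 0) with hS
  have h1 : ∑ i, e i = ∑ i ∈ S, e i :=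
    (Finset.sum_filter_of_ne (fun i _ h => h)).symm
  have h2 : ∑ i, e i ^ 2 = ∑ i ∈ S, e i ^ 2 :=
    (Finset.sum_filter_of_ne (fun i _ h => by
      intro he; exact h (by rw [he]; ring))).symm
  have h3 : ∑ i, |e i| = ∑ i ∈ S, |e i| :=
    (Finset.sum_filter_of_ne (fun i _ h => by
      intro he; exact h (by rw [he]; simp))).symm
  rw [h1, h2, h3]
  rw [h1, h2] at hprod
  have hc : S.card = 0 ∨ S.card = 1 ∨ S.card = 2 := by omega
  rcases hc with hc | hc | hc
  · rw [Finset.card_eq_zero] at hc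
    simp [hc]
  · obtain ⟨a, hSa⟩ := Finset.card_eq_one.mp hc
    rw [hSa]
    simp only [Finset.sum_singleton]
    rw [sq_abs]; ring
  · obtain ⟨a, b, hab, hSa⟩ := Finset.card_eq_two.mp hc
    rw [hSa] at hprod ⊢
    simp only [Finset.sum_pair hab] at hprod ⊢
    have hab0 : e a * e b ≤ 0 := by nlinarith
    have h4 : |e a| * |e b| = -(e a * e b) := by
      rw [← abs_mul]; exact abs_of_nonpos hab0
    nlinarith [sq_abs (e a), sq_abs (e b)]

set_option maxHeartbeats 1000000 in
theorem stmt17 {n m : ℕ} (f : Fin m → (Fin n → ℝ)) (a₀ Λ : ℝ) (hΛ0 : 0 ≤ Λ)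
    (ha₀ : IsLeast {s : ℝ | ∃ x y : Fin n → ℝ, (∑ i, x i ^ 2) = 1 ∧ (∑ i, y i ^ 2) = 1 ∧
      s = ∑ j, abs (x ⬝ᵥ f j) ^ 2 * abs (y ⬝ᵥ f j) ^ 2} a₀)
    (hΛ : IsGreatest {t : ℝ | ∃ x : Fin n → ℝ, (∑ i, x i ^ 2) = 1 ∧
      t = ∑ j, abs (x ⬝ᵥ f j) ^ 4} (Λ ^ 4))
    (x y : Fin n → ℝ)
    (X : Matrix (Fin n) (Fin n) ℝ)
    (hXdef : X = Matrix.vecMulVec x x - Matrix.vecMulVec y y)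
    (hX : X.IsHermitian)
    (d₁ : ℝ) (hd₁ : d₁ = ∑ i, abs (hX.eigenvalues i)) :
    Real.sqrt a₀ * d₁ ≤ Real.sqrt (∑ j, (abs (f j ⬝ᵥ x) ^ 2 - abs (f j ⬝ᵥ y) ^ 2) ^ 2) ∧
    Real.sqrt (∑ j, (abs (f j ⬝ᵥ x) ^ 2 - abs (f j ⬝ᵥ y) ^ 2) ^ 2) ≤ Λ ^ 2 * d₁ := by
  classical
  set e : Fin n → ℝ := hX.eigenvalues with he
  set u : Fin n → ℝ := x - y with hu
  set v : Fin n → ℝ := x + y with hv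
  -- trace identities
  have ht1 : ∑ i, e i = x ⬝ᵥ x - y ⬝ᵥ y := by
    rw [← trace_eig X hX, hXdef, Matrix.trace_sub, trace_vmv, trace_vmv]
  have ht2 : ∑ i, e i ^ 2 = (x ⬝ᵥ x) ^ 2 + (y ⬝ᵥ y) ^ 2 - 2 * (x ⬝ᵥ y) ^ 2 := by
    rw [← trace_sq_eig X hX, hXdef]
    simp only [sub_mul, mul_sub, Matrix.trace_sub, trace_vmv_mul]
    rw [dotProduct_comm y x]
    ring
  -- Cauchy-Schwarz for x,y
  have hCS : (x ⬝ᵥ y) ^ 2 ≤ (x ⬝ᵥ x) * (y ⬝ᵥ y) := by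
    simpa [dotProduct, sq] using
      Finset.sum_mul_sq_le_sq_mul_sq Finset.univ x y
  have hprod : (∑ i, e i) ^ 2 ≤ ∑ i, e i ^ 2 := by
    rw [ht1, ht2]; nlinarith
  -- rank bound
  have hcard : (Finset.univ.filter (fun i => e i ≠ 0)).card ≤ 2 := by
    have h1 : X.rank = Fintype.card {i // e i ≠ 0} := hX.rank_eq_card_non_zero_eigs
    have h2 : Fintype.card {i // e i ≠ 0}
        = (Finset.univ.filter (fun i => e i ≠ 0)).card := Fintype.card_subtype _
    rw [← h2, ← h1]
    rw [hXdef]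
    exact rank_le_two x y
  -- d₁² = ‖u‖²‖v‖²
  have hd1sq : d₁ ^ 2 = (u ⬝ᵥ u) * (v ⬝ᵥ v) := by
    rw [hd₁, eig_identity e hcard hprod, ht1, ht2]
    simp only [hu, hv, sub_dotProduct, dotProduct_sub,
      add_dotProduct, dotProduct_add, dotProduct_comm y x]
    ring
  have hd1nn : 0 ≤ d₁ := by
    rw [hd₁]; exact Finset.sum_nonneg fun i _ => abs_nonneg _
  -- rewrite the middle sum
  have hP : (∑ j, (abs (f j ⬝ᵥ x) ^ 2 - abs (f j ⬝ᵥ y) ^ 2) ^ 2)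
      = ∑ j, ((f j ⬝ᵥ u) * (f j ⬝ᵥ v)) ^ 2 := by
    refine Finset.sum_congr rfl fun j _ => ?_
    rw [sq_abs, sq_abs]
    simp only [hu, hv, dotProduct_sub, dotProduct_add]
    ring
  set P : ℝ := ∑ j, ((f j ⬝ᵥ u) * (f j ⬝ᵥ v)) ^ 2 with hPdef
  have hPnn : 0 ≤ P := Finset.sum_nonneg fun j _ => sq_nonneg _
  have ha₀nn : 0 ≤ a₀ := by
    obtain ⟨x', y', -, -, hs⟩ := ha₀.1
    rw [hs]
    exact Finset.sum_nonneg fun j _ => mul_nonneg (by positivity) (by positivity)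
  have huu : 0 ≤ u ⬝ᵥ u := Finset.sum_nonneg fun i _ => mul_self_nonneg _
  have hvv : 0 ≤ v ⬝ᵥ v := Finset.sum_nonneg fun i _ => mul_self_nonneg _
  -- dot product with normalized vector facts
  have norm_unit : ∀ w : Fin n → ℝ, w ⬝ᵥ w ≠ 0 →
      (∑ i, ((Real.sqrt (w ⬝ᵥ w))⁻¹ * w i) ^ 2) = 1 := by
    intro w hw
    have hww : 0 ≤ w ⬝ᵥ w := Finset.sum_nonneg fun i _ => mul_self_nonneg _
    have hsq : Real.sqrt (w ⬝ᵥ w) ^ 2 = w ⬝ᵥ w := Real.sq_sqrt hww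
    have hs0 : Real.sqrt (w ⬝ᵥ w) ≠ 0 := by
      intro h0; rw [h0] at hsq; simp at hsq; exact hw hsq.symm
    have : ∑ i, ((Real.sqrt (w ⬝ᵥ w))⁻¹ * w i) ^ 2
        = (Real.sqrt (w ⬝ᵥ w))⁻¹ ^ 2 * ∑ i, w i ^ 2 := by
      rw [Finset.mul_sum]; exact Finset.sum_congr rfl fun i _ => by ring
    rw [this, show (∑ i, w i ^ 2) = w ⬝ᵥ w from Finset.sum_congr rfl fun i _ => sq (w i) ▸ by
      simp [dotProduct, sq]]
    field_simp
    exact hsq.symm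
  have dot_fun : ∀ (c : ℝ) (w g : Fin n → ℝ),
      (fun i => c * w i) ⬝ᵥ g = c * (w ⬝ᵥ g) := by
    intro c w g
    simp [dotProduct, Finset.mul_sum, mul_assoc]
  constructor
  · -- lower bound
    rw [hP]
    by_cases hd0 : d₁ = 0
    · rw [hd0, mul_zero]
      exact Real.sqrt_nonneg _
    · have hd1pos : 0 < d₁ := lt_of_le_of_ne hd1nn (Ne.symm hd0)
      have hpp : 0 < (u ⬝ᵥ u) * (v ⬝ᵥ v) := by rw [← hd1sq]; positivity
      have hu0 : 0 < u ⬝ᵥ u := by rcases mul_pos_iff.mp hpp with ⟨h, _⟩ | ⟨h, _⟩ <;> linarith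
      have hv0 : 0 < v ⬝ᵥ v := by rcases mul_pos_iff.mp hpp with ⟨_, h⟩ | ⟨_, h⟩ <;> linarith
      set su := Real.sqrt (u ⬝ᵥ u) with hsu
      set sv := Real.sqrt (v ⬝ᵥ v) with hsv
      have hsu2 : su ^ 2 = u ⬝ᵥ u := Real.sq_sqrt huu
      have hsv2 : sv ^ 2 = v ⬝ᵥ v := Real.sq_sqrt hvv
      have hsupos : 0 < su := Real.sqrt_pos.mpr hu0
      have hsvpos : 0 < sv := Real.sqrt_pos.mpr hv0
      have key := ha₀.2 ⟨fun i => su⁻¹ * u i, fun i => sv⁻¹ * v i,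
        norm_unit u hu0.ne', norm_unit v hv0.ne', rfl⟩
      have hsum : (∑ j, |(fun i => su⁻¹ * u i) ⬝ᵥ f j| ^ 2 * |(fun i => sv⁻¹ * v i) ⬝ᵥ f j| ^ 2)
          = (su ^ 2 * sv ^ 2)⁻¹ * P := by
        rw [hPdef, Finset.mul_sum]
        refine Finset.sum_congr rfl fun j _ => ?_
        rw [dot_fun, dot_fun, dotProduct_comm (f j) u, dotProduct_comm (f j) v]
        simp only [abs_mul, mul_pow, abs_inv, abs_of_pos hsupos, abs_of_pos hsvpos, sq_abs]
        field_simp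
      rw [hsum] at key
      have hle : a₀ * d₁ ^ 2 ≤ P := by
        have h2 : su ^ 2 * sv ^ 2 = d₁ ^ 2 := by rw [hsu2, hsv2, hd1sq]
        rw [← h2]
        have hpos : 0 < su ^ 2 * sv ^ 2 := by positivity
        calc a₀ * (su ^ 2 * sv ^ 2) ≤ ((su ^ 2 * sv ^ 2)⁻¹ * P) * (su ^ 2 * sv ^ 2) :=
              mul_le_mul_of_nonneg_right key hpos.le
          _ = P := by field_simp
      calc Real.sqrt a₀ * d₁ = Real.sqrt (a₀ * d₁ ^ 2) := by
            rw [Real.sqrt_mul ha₀nn, Real.sqrt_sq hd1nn]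
        _ ≤ _ := Real.sqrt_le_sqrt hle
  · -- upper bound
    rw [hP]
    have h4 : ∀ w : Fin n → ℝ, (∑ j, (f j ⬝ᵥ w) ^ 4) ≤ Λ ^ 4 * (w ⬝ᵥ w) ^ 2 := by
      intro w
      by_cases hw : w ⬝ᵥ w = 0
      · have hz : ∀ j, f j ⬝ᵥ w = 0 := by
          intro j
          have hcs : (f j ⬝ᵥ w) ^ 2 ≤ (∑ i, f j i ^ 2) * ∑ i, w i ^ 2 := by
            simpa [dotProduct] using
              Finset.sum_mul_sq_le_sq_mul_sq Finset.univ (f j) w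
          have hw' : (∑ i, w i ^ 2) = 0 := by
            rw [← hw]; exact Finset.sum_congr rfl fun i _ => (sq (w i)).symm ▸ by
              simp [dotProduct, sq]
          have h0 : (f j ⬝ᵥ w) ^ 2 = 0 := le_antisymm (by rw [hw'] at hcs; simpa using hcs)
            (sq_nonneg _)
          exact sq_eq_zero_iff.mp h0
        simp [hz, hw]
      · have hw0 : 0 < w ⬝ᵥ w :=
          lt_of_le_of_ne (Finset.sum_nonneg fun i _ => mul_self_nonneg _) (Ne.symm hw)
        set sw := Real.sqrt (w ⬝ᵥ w) with hsw
        have hsw2 : sw ^ 2 = w ⬝ᵥ w := Real.sq_sqrt hw0.le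
        have hswpos : 0 < sw := Real.sqrt_pos.mpr hw0
        have key := hΛ.2 ⟨fun i => sw⁻¹ * w i, norm_unit w hw0.ne', rfl⟩
        have hsum : (∑ j, |(fun i => sw⁻¹ * w i) ⬝ᵥ f j| ^ 4)
            = (sw ^ 4)⁻¹ * ∑ j, (f j ⬝ᵥ w) ^ 4 := by
          rw [Finset.mul_sum]
          refine Finset.sum_congr rfl fun j _ => ?_
          rw [dot_fun, dotProduct_comm (f j) w]
          simp only [abs_mul, mul_pow, abs_inv, abs_of_pos hswpos]
          rw [show ∀ t : ℝ, |t| ^ 4 = t ^ 4 from fun t => by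
            rw [show (4 : ℕ) = 2 * 2 from rfl, pow_mul, pow_mul, sq_abs]]
          field_simp
        rw [hsum] at key
        have hpos : (0:ℝ) < sw ^ 4 := by positivity
        calc (∑ j, (f j ⬝ᵥ w) ^ 4) = (sw ^ 4)⁻¹ * (∑ j, (f j ⬝ᵥ w) ^ 4) * sw ^ 4 := by
              field_simp
          _ ≤ Λ ^ 4 * sw ^ 4 := mul_le_mul_of_nonneg_right key hpos.le
          _ = Λ ^ 4 * (w ⬝ᵥ w) ^ 2 := by rw [← hsw2]; ring
    have hcs2 : P ^ 2 ≤ (∑ j, (f j ⬝ᵥ u) ^ 4) * (∑ j, (f j ⬝ᵥ v) ^ 4) := by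
      have := Finset.sum_mul_sq_le_sq_mul_sq Finset.univ
        (fun j => (f j ⬝ᵥ u) ^ 2) (fun j => (f j ⬝ᵥ v) ^ 2)
      calc P ^ 2 = (∑ j, (f j ⬝ᵥ u) ^ 2 * (f j ⬝ᵥ v) ^ 2) ^ 2 := by
            rw [hPdef]
            congr 1
            exact Finset.sum_congr rfl fun j _ => by ring
        _ ≤ (∑ j, ((f j ⬝ᵥ u) ^ 2) ^ 2) * ∑ j, ((f j ⬝ᵥ v) ^ 2) ^ 2 := this
        _ = (∑ j, (f j ⬝ᵥ u) ^ 4) * (∑ j, (f j ⬝ᵥ v) ^ 4) := by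
            congr 1 <;> exact Finset.sum_congr rfl fun j _ => by ring
    have hu4nn : (0:ℝ) ≤ ∑ j, (f j ⬝ᵥ u) ^ 4 :=
      Finset.sum_nonneg fun j _ => by positivity
    have hv4nn : (0:ℝ) ≤ ∑ j, (f j ⬝ᵥ v) ^ 4 :=
      Finset.sum_nonneg fun j _ => by positivity
    have hQ : P ^ 2 ≤ (Λ ^ 4 * (u ⬝ᵥ u) ^ 2) * (Λ ^ 4 * (v ⬝ᵥ v) ^ 2) :=
      hcs2.trans (mul_le_mul (h4 u) (h4 v) hv4nn (by positivity))
    have hPle : P ≤ Λ ^ 4 * d₁ ^ 2 := by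
      have hQ' : P ^ 2 ≤ (Λ ^ 4 * d₁ ^ 2) ^ 2 := by
        rw [show (Λ ^ 4 * d₁ ^ 2) ^ 2 = (Λ ^ 4 * (u ⬝ᵥ u) ^ 2) * (Λ ^ 4 * (v ⬝ᵥ v) ^ 2) from by
          rw [show d₁ ^ 2 = (u ⬝ᵥ u) * (v ⬝ᵥ v) from hd1sq]; ring]
        exact hQ
      have hQnn : (0:ℝ) ≤ Λ ^ 4 * d₁ ^ 2 := by positivity
      nlinarith
    calc Real.sqrt P ≤ Real.sqrt (Λ ^ 4 * d₁ ^ 2) := Real.sqrt_le_sqrt hPle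
      _ = Λ ^ 2 * d₁ := by
          rw [show Λ ^ 4 * d₁ ^ 2 = (Λ ^ 2 * d₁) ^ 2 from by ring,
            Real.sqrt_sq (by positivity)]
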